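/- The even-indexed terms of the Veronese sequence converge to 1 + 1/√3, and the odd-indexed terms converge to 1 − 1/√3. -/

import Mathlib

open Filter Topology

/-- The Veronese sequence as a sequence of real numbers: `α 0 = 1`,
`α (i+1) = 2 - α i` for `i` odd, and `α (i+1) = α i / (3 α i - 1)` for `i` even. -/
noncomputable def veronese : ℕ → ℝ
  | 0 => 1
  | (i + 1) => if Odd i then 2 - veronese i else veronese i / (3 * veronese i - 1)

/-- The even-indexed terms of the Veronese sequence converge to `1 + 1/√3`,
and the odd-indexed terms converge to `1 - 1/√3`. -/
theorem veronese_limits :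
    Tendsto (fun m => veronese (2 * m)) atTop (𝓝 (1 + 1 / Real.sqrt 3)) ∧
    Tendsto (fun m => veronese (2 * m + 1)) atTop (𝓝 (1 - 1 / Real.sqrt 3)) := by
  have hs2 : Real.sqrt 3 ^ 2 = 3 := Real.sq_sqrt (by norm_num)
  set s := Real.sqrt 3 with hsdef
  have hs_pos : 0 < s := Real.sqrt_pos.mpr (by norm_num)
  have h2 : s < 2 := by nlinarith
  have h1 : (1:ℝ) < s := by nlinarith
  set r : ℝ := 7 - 4*s with hrdef
  have hr0 : 0 < r := by nlinarith
  have hr1 : r < 1 := by nlinarith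
  have key : ∀ m, veronese (2*m) * (1 + r^m) = (1 + s/3) + (1 - s/3) * r^m := by
    intro m
    induction m with
    | zero => simp [veronese]
    | succ m ih =>
      have ht0 : 0 < r^m := pow_pos hr0 m
      have ht1 : r^m ≤ 1 := pow_le_one₀ hr0.le hr1.le
      have hb1 : (1:ℝ) ≤ veronese (2*m) := by nlinarith
      have hden : 3 * veronese (2*m) - 1 ≠ 0 := by nlinarith
      have e1 : veronese (2*m+1) = veronese (2*m) / (3 * veronese (2*m) - 1) := by
        rw [veronese]; simp [Nat.even_mul]
      have e2 : veronese (2*(m+1)) = 2 - veronese (2*m+1) := by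
        have h : 2*(m+1) = (2*m+1)+1 := by ring
        rw [h, veronese]; simp [Nat.odd_add_one, Nat.even_mul]
      rw [e2, e1, pow_succ]
      have hden' : veronese (2*m) * 3 - 1 ≠ 0 := by rwa [mul_comm]
      field_simp
      linear_combination (6 - 3*s) * ih + (-12 * veronese (2*m) * r^m + 5 * r^m - 1) * hs2
  have habs : |r| < 1 := by rw [abs_of_pos hr0]; exact hr1
  have h0 : Tendsto (fun m : ℕ => r^m) atTop (𝓝 0) :=
    tendsto_pow_atTop_nhds_zero_of_abs_lt_one habs
  have hfun : ∀ m, veronese (2*m) = ((1 + s/3) + (1 - s/3) * r^m) / (1 + r^m) := by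
    intro m
    have ht0 : 0 < r^m := pow_pos hr0 m
    have hne : 1 + r^m ≠ 0 := by positivity
    rw [eq_div_iff hne]; exact key m
  have hLval : (1 : ℝ) + 1/s = 1 + s/3 := by
    have : s * s = 3 := by nlinarith
    field_simp
    linarith [this]
  have heven : Tendsto (fun m => veronese (2 * m)) atTop (𝓝 (1 + 1 / s)) := by
    have hdiv : Tendsto (fun m : ℕ => ((1 + s/3) + (1 - s/3) * r^m) / (1 + r^m)) atTop
        (𝓝 (((1 + s/3) + (1 - s/3) * 0) / (1 + 0))) := by
      exact (tendsto_const_nhds.add (h0.const_mul (1 - s/3))).div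
        (tendsto_const_nhds.add h0) (by norm_num)
    simp only [mul_zero, add_zero, div_one] at hdiv
    rw [hLval]
    exact hdiv.congr (fun m => (hfun m).symm)
  refine ⟨heven, ?_⟩
  have hodd_eq : ∀ m, veronese (2*m+1) = 2 - veronese (2*(m+1)) := by
    intro m
    have e2 : veronese (2*(m+1)) = 2 - veronese (2*m+1) := by
      have h : 2*(m+1) = (2*m+1)+1 := by ring
      rw [h, veronese]; simp [Nat.odd_add_one, Nat.even_mul]
    linarith [e2]
  have hshift : Tendsto (fun m => veronese (2 * (m+1))) atTop (𝓝 (1 + 1 / s)) :=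
    heven.comp (tendsto_add_atTop_nat 1)
  have : Tendsto (fun m => 2 - veronese (2 * (m+1))) atTop (𝓝 (2 - (1 + 1/s))) :=
    tendsto_const_nhds.sub hshift
  have h2L : (2 : ℝ) - (1 + 1/s) = 1 - 1/s := by ring
  rw [h2L] at this
  exact this.congr (fun m => (hodd_eq m).symm)
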